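/- Let φ be a non-degenerate (σ,ε)-sesquilinear form on V and let X be a finite-dimensional totally isotropic subspace of V. Then the codimension of X⊥ in V equals the dimension of X, and X⊥⊥ = X. -/

import Mathlib

open MulOpposite

variable {K : Type*} [DivisionRing K]

/-- `σ` is an anti-automorphism of the division ring `K`. -/
def IsAntiAuto (σ : K → K) : Prop :=
  Function.Bijective σ ∧ (∀ a b : K, σ (a + b) = σ a + σ b) ∧
    ∀ a b : K, σ (a * b) = σ b * σ a

/-- `(σ, ε)` is an admissible pair: `σ` is an anti-automorphism, `ε ≠ 0`,
`σ ε = ε⁻¹` and `σ ∘ σ` is conjugation by `ε`. -/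
def IsAdmissiblePair (σ : K → K) (ε : K) : Prop :=
  IsAntiAuto σ ∧ ε ≠ 0 ∧ σ ε = ε⁻¹ ∧ ∀ t : K, σ (σ t) = ε * t * ε⁻¹

variable {V : Type*} [AddCommGroup V] [Module Kᵐᵒᵖ V]

/-- `φ` is a reflexive `(σ, ε)`-sesquilinear form on the right `K`-vector space `V`
(a right `K`-vector space is a left `Kᵐᵒᵖ`-vector space; right scalar multiplication
of `x` by `α` is `op α • x`). -/
def IsSesq (σ : K → K) (ε : K) (φ : V → V → K) : Prop :=
  (∀ x y z : V, φ (x + y) z = φ x z + φ y z) ∧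
  (∀ x y z : V, φ x (y + z) = φ x y + φ x z) ∧
  (∀ (α : K) (x y : V), φ (op α • x) y = σ α * φ x y) ∧
  (∀ (β : K) (x y : V), φ x (op β • y) = φ x y * β) ∧
  ∀ x y : V, φ y x = σ (φ x y) * ε

/-- A subspace `S` of `V` is totally isotropic for `φ` if `φ` vanishes identically on it. -/
def IsTotIso (φ : V → V → K) (S : Submodule Kᵐᵒᵖ V) : Prop :=
  ∀ x ∈ S, ∀ y ∈ S, φ x y = 0

/-- A maximal totally isotropic subspace: totally isotropic and maximal under inclusion
among totally isotropic subspaces. -/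
def IsMaxTotIso (φ : V → V → K) (S : Submodule Kᵐᵒᵖ V) : Prop :=
  IsTotIso φ S ∧ ∀ T : Submodule Kᵐᵒᵖ V, IsTotIso φ T → S ≤ T → T = S

/-- `φ` is trace-valued: every `φ(x,x)` is of the form `t + σ(t)ε`. -/
def IsTraceValued (σ : K → K) (ε : K) (φ : V → V → K) : Prop :=
  ∀ x : V, ∃ t : K, φ x x = t + σ t * ε

section MyAux

variable {K : Type*} [DivisionRing K] {V : Type*} [AddCommGroup V] [Module Kᵐᵒᵖ V]

open MulOpposite

/-- The ring isomorphism `Kᵐᵒᵖ ≃+* K` induced by an anti-automorphism `σ`. -/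
noncomputable def antiAutoEquiv (σ : K → K) (hσ : IsAntiAuto σ) : Kᵐᵒᵖ ≃+* K where
  toEquiv := (opEquiv : K ≃ Kᵐᵒᵖ).symm.trans (Equiv.ofBijective σ hσ.1)
  map_add' := fun a b => hσ.2.1 a.unop b.unop
  map_mul' := fun a b => by
    show σ (a * b).unop = σ a.unop * σ b.unop
    rw [unop_mul]
    exact hσ.2.2 _ _

theorem antiAutoEquiv_apply (σ : K → K) (hσ : IsAntiAuto σ) (a : Kᵐᵒᵖ) :
    antiAutoEquiv σ hσ a = σ a.unop := rfl

theorem sigma_zero (σ : K → K) (hσ : IsAntiAuto σ) : σ 0 = 0 := by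
  have h := hσ.2.1 0 0
  rw [add_zero] at h
  have := congrArg (fun t => t - σ 0) h
  simpa using this.symm

/-- A proper subspace of `ι → K` is annihilated by a nonzero "right" functional. -/
theorem exists_ann {ι : Type*} [Fintype ι] [DecidableEq ι] (W : Submodule K (ι → K))
    (hW : W ≠ ⊤) : ∃ c : ι → K, c ≠ 0 ∧ ∀ v ∈ W, ∑ i, v i * c i = 0 := by
  have hnt : Nontrivial ((ι → K) ⧸ W) := Submodule.Quotient.nontrivial_iff.2 hW
  obtain ⟨u, hu⟩ : ∃ u : (ι → K) ⧸ W, u ≠ 0 := exists_ne 0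
  let b := Module.Free.chooseBasis K ((ι → K) ⧸ W)
  obtain ⟨j, hj⟩ : ∃ j, b.repr u j ≠ 0 := by
    by_contra h
    push_neg at h
    apply hu
    apply b.repr.injective
    ext j
    simp [h j]
  let f : (ι → K) →ₗ[K] K := (b.coord j).comp W.mkQ
  have hfv : ∀ v : ι → K, f v = ∑ i, v i * f (Pi.single i 1) := by
    intro v
    have hv : ∑ i, v i • (Pi.single i 1 : ι → K) = v := by
      funext k
      rw [Finset.sum_apply]
      simp [Pi.single_apply]
    calc f v = f (∑ i, v i • (Pi.single i 1 : ι → K)) := by rw [hv]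
      _ = ∑ i, v i * f (Pi.single i 1) := by
          rw [map_sum]
          simp [smul_eq_mul]
  refine ⟨fun i => f (Pi.single i 1), ?_, ?_⟩
  · intro hc
    obtain ⟨v, hv⟩ := Submodule.mkQ_surjective W u
    apply hj
    have h1 : f v = b.repr u j := by simp [f, hv, Module.Basis.coord_apply]
    have h2 : f v = 0 := by
      rw [hfv v]
      refine Finset.sum_eq_zero fun i _ => ?_
      have : f (Pi.single i 1) = 0 := congrFun hc i
      rw [this, mul_zero]
    rw [← h1, h2]
  · intro v hv
    have h2 : f v = 0 := by
      simp [f, (Submodule.Quotient.mk_eq_zero W).2 hv, Submodule.mkQ_apply]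
    rw [← hfv v, h2]

/-- The key rank computation: for any finite linearly independent family `x` in `V`,
the quotient of `V` by the "perp" of the family has rank the cardinality of the family. -/
theorem rank_quot_eq (σ : K → K) (ε : K) (hpair : IsAdmissiblePair σ ε)
    (φ : V → V → K) (hφ : IsSesq σ ε φ)
    (hnd : ∀ a : V, (∀ x : V, φ a x = 0) → a = 0)
    {ι : Type*} [Fintype ι] [DecidableEq ι] (x : ι → V)
    (hx : LinearIndependent Kᵐᵒᵖ x)
    (W : Submodule Kᵐᵒᵖ V) (hW : ∀ y : V, y ∈ W ↔ ∀ i, φ y (x i) = 0) :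
    Module.rank Kᵐᵒᵖ (V ⧸ W) = Fintype.card ι := by
  obtain ⟨hσ, hε, -, -⟩ := hpair
  let τ : Kᵐᵒᵖ ≃+* K := antiAutoEquiv σ hσ
  haveI : RingHomSurjective (τ : Kᵐᵒᵖ →+* K) := ⟨τ.surjective⟩
  -- the semilinear map
  let B : V →ₛₗ[(τ : Kᵐᵒᵖ →+* K)] (ι → K) :=
    { toFun := fun y i => φ y (x i)
      map_add' := fun y z => by
        funext i
        exact hφ.1 y z (x i)
      map_smul' := fun a y => by
        funext i
        show φ (a • y) (x i) = σ a.unop * φ y (x i)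
        have := hφ.2.2.1 a.unop y (x i)
        rwa [op_unop] at this }
  have hBker : ∀ y : V, B y = 0 ↔ y ∈ W := by
    intro y
    rw [hW]
    constructor
    · intro h i; exact congrFun h i
    · intro h; funext i; exact h i
  -- surjectivity
  have hsurj : Function.Surjective B := by
    rw [← LinearMap.range_eq_top]
    by_contra hne
    obtain ⟨c, hc, hann⟩ := exists_ann (LinearMap.range B) hne
    set x₀ : V := ∑ i, op (c i) • x i with hx₀
    have h₀ : ∀ y : V, φ y x₀ = 0 := by
      intro y
      let D : V →+ K := AddMonoidHom.mk' (φ y) (fun a b => hφ.2.1 y a b)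
      have h1 : φ y x₀ = ∑ i, φ y (x i) * c i := by
        show D (∑ i, op (c i) • x i) = _
        rw [map_sum]
        refine Finset.sum_congr rfl fun i _ => ?_
        exact hφ.2.2.2.1 (c i) y (x i)
      rw [h1]
      exact hann (B y) (LinearMap.mem_range_self B y)
    have hx₀0 : x₀ = 0 := by
      apply hnd
      intro y
      have := hφ.2.2.2.2 y x₀
      rw [h₀ y, sigma_zero σ hσ, zero_mul] at this
      exact this
    have : ∀ i ∈ (Finset.univ : Finset ι), op (c i) = 0 := by
      exact linearIndependent_iff'.1 hx Finset.univ (fun i => op (c i)) (hx₀ ▸ hx₀0)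
    apply hc
    funext i
    have := this i (Finset.mem_univ i)
    simpa using congrArg unop this
  -- the quotient equivalence
  have hle : W ≤ LinearMap.ker B := fun y hy => LinearMap.mem_ker.2 ((hBker y).2 hy)
  let e : (V ⧸ W) →ₛₗ[(τ : Kᵐᵒᵖ →+* K)] (ι → K) := W.liftQ B hle
  have hkerW : W = LinearMap.ker B := by
    ext y
    rw [LinearMap.mem_ker, hBker]
  have heinj : Function.Injective e := by
    rw [← LinearMap.ker_eq_bot]
    exact Submodule.ker_liftQ_eq_bot' W B hkerW
  have hesurj : Function.Surjective e := by
    intro v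
    obtain ⟨y, hy⟩ := hsurj v
    exact ⟨W.mkQ y, by rwa [Submodule.mkQ_apply, Submodule.liftQ_apply]⟩
  let j : (V ⧸ W) ≃+ (ι → K) := AddEquiv.ofBijective e ⟨heinj, hesurj⟩
  have hrank :=
    lift_rank_eq_of_equiv_equiv (ZeroHom.mk (fun a => τ a) (map_zero τ)) j
      τ.bijective (fun r m => by
        show e (r • m) = τ r • e m
        exact e.map_smulₛₗ r m)
  rw [rank_fun' (R := K) (η := ι), Cardinal.lift_natCast] at hrank
  exact Cardinal.lift_eq_nat_iff.1 hrank

end MyAux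


/-- For a non-degenerate form `φ` and a finite-dimensional totally isotropic
subspace `X`, the codimension of `X⊥` in `V` equals the dimension of `X`, and `X⊥⊥ = X`. -/
theorem stmt_4 (σ : K → K) (ε : K) (hpair : IsAdmissiblePair σ ε)
    (φ : V → V → K) (hφ : IsSesq σ ε φ)
    (hnd : ∀ a : V, (∀ x : V, φ a x = 0) → a = 0)
    (X : Submodule Kᵐᵒᵖ V) (hX : IsTotIso φ X) (hXfin : FiniteDimensional Kᵐᵒᵖ ↥X)
    (Wp Wpp : Submodule Kᵐᵒᵖ V)
    (hWp : (Wp : Set V) = {y : V | ∀ x ∈ X, φ x y = 0})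
    (hWpp : (Wpp : Set V) = {z : V | ∀ y ∈ Wp, φ y z = 0}) :
    Module.rank Kᵐᵒᵖ (V ⧸ Wp) = Module.rank Kᵐᵒᵖ ↥X ∧ Wpp = X := by
  classical
  have hσ := hpair.1
  -- reflexivity of the form
  have hrefl : ∀ a b : V, φ a b = 0 → φ b a = 0 := by
    intro a b h
    have := hφ.2.2.2.2 a b
    rwa [h, sigma_zero σ hσ, zero_mul] at this
  have hWpmem : ∀ y : V, y ∈ Wp ↔ ∀ x ∈ X, φ x y = 0 := fun y => by
    simpa using Set.ext_iff.1 hWp y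
  have hWppmem : ∀ z : V, z ∈ Wpp ↔ ∀ y ∈ Wp, φ y z = 0 := fun z => by
    simpa using Set.ext_iff.1 hWpp z
  set n := Module.finrank Kᵐᵒᵖ X with hn
  let b : Module.Basis (Fin n) Kᵐᵒᵖ X := Module.finBasis Kᵐᵒᵖ X
  let x : Fin n → V := fun i => (b i : V)
  have hxind : LinearIndependent Kᵐᵒᵖ x :=
    b.linearIndependent.map' X.subtype X.ker_subtype
  have hxspan : Submodule.span Kᵐᵒᵖ (Set.range x) = X := by
    have : Set.range x = X.subtype '' Set.range b := by
      rw [← Set.range_comp]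
      rfl
    rw [this, Submodule.span_image, b.span_eq, Submodule.map_subtype_top]
  -- membership in Wp in terms of the basis
  have hWpbasis : ∀ y : V, y ∈ Wp ↔ ∀ i, φ y (x i) = 0 := by
    intro y
    rw [hWpmem]
    constructor
    · intro h i
      refine hrefl _ _ (h (x i) ?_)
      rw [← hxspan]
      exact Submodule.subset_span (Set.mem_range_self i)
    · intro h v hv
      -- the second-argument linear functional
      let D : V →ₗ[Kᵐᵒᵖ] K :=
        { toFun := φ y
          map_add' := fun a c => hφ.2.1 y a c
          map_smul' := fun a v => by
            have h := hφ.2.2.2.1 a.unop y v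
            simp only [op_unop] at h
            simp only [RingHom.id_apply, MulOpposite.smul_eq_mul_unop]
            exact h }
      have hXle : X ≤ LinearMap.ker D := by
        rw [← hxspan]
        rw [Submodule.span_le]
        rintro _ ⟨i, rfl⟩
        exact LinearMap.mem_ker.2 (h i)
      exact hrefl _ _ (hXle hv)
  have hcard : Module.rank Kᵐᵒᵖ (V ⧸ Wp) = Fintype.card (Fin n) :=
    rank_quot_eq σ ε hpair φ hφ hnd x hxind Wp hWpbasis
  constructor
  · rw [hcard, Fintype.card_fin, ← Module.finrank_eq_rank Kᵐᵒᵖ X]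
  · apply le_antisymm
    · -- Wpp ≤ X
      intro z hz
      by_contra hzX
      -- extended family
      let x' : Option (Fin n) → V := fun o => Option.casesOn' o z x
      have hx'ind : LinearIndependent Kᵐᵒᵖ x' := by
        apply hxind.option
        rw [hxspan]
        exact hzX
      have hW' : ∀ y : V, y ∈ Wp ↔ ∀ o, φ y (x' o) = 0 := by
        intro y
        constructor
        · intro hy o
          cases o with
          | none => exact (hWppmem z).1 hz y hy
          | some i => exact (hWpbasis y).1 hy i
        · intro h
          exact (hWpbasis y).2 fun i => h (some i)
      have hcard' : Module.rank Kᵐᵒᵖ (V ⧸ Wp) = Fintype.card (Option (Fin n)) :=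
        rank_quot_eq σ ε hpair φ hφ hnd x' hx'ind Wp hW'
      rw [hcard] at hcard'
      rw [Fintype.card_option, Fintype.card_fin] at hcard'
      have : n = n + 1 := by exact_mod_cast hcard'
      omega
    · -- X ≤ Wpp
      intro v hv
      rw [hWppmem]
      intro y hy
      exact hrefl v y ((hWpmem y).1 hy v hv)
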